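/- Let u be a smooth solution of the 2D hyperviscous Navier–Stokes equations u_t + ν A² u + B(u,u) = 0 with ν > 0 on the periodic torus, where A is the Stokes operator and B(u,v) = P[(u·∇)v]. Then for t ≥ t₀ > 0, e^{−b(t−t₀)} ‖u(t₀)‖ ≤ ‖u(t)‖ ≤ e^{−νλ₁²(t−t₀)} ‖u(t₀)‖, where λ₁ = (2π/L)² is the first eigenvalue of A and b = ν (‖Au(t₀)‖²/‖u(t₀)‖²) exp{c ν^{−3/2} λ₁^{−2} ‖u(t₀)‖²}. -/

import Mathlib

open Set Real Topology Filter

set_option maxHeartbeats 1600000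

/-- A "continuous induction" barrier lemma: if `φ` has the right-cluster property
(H1: arbitrarily close to the right there are points with value close to or below
the current one) and strictly larger values immediately to the left (H2), then
`φ t ≤ φ s₀` for `t ≥ s₀`. -/
private lemma barrier_lemma (φ : ℝ → ℝ) {s₀ t : ℝ} (hst : s₀ ≤ t)
    (H1 : ∀ r, s₀ ≤ r → r < t → ∀ ε : ℝ, 0 < ε → ∃ x, r < x ∧ x ≤ t ∧ φ x < φ r + ε)
    (H2 : ∀ r, s₀ < r → ∃ θ, θ < r ∧ ∀ s, θ < s → s < r → φ r < φ s) :
    φ t ≤ φ s₀ := by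
  rcases eq_or_lt_of_le hst with rfl | hlt
  · exact le_refl _
  by_contra hcon
  push_neg at hcon
  set c : ℝ := (φ s₀ + φ t) / 2 with hc
  have hc₀ : φ s₀ < c := by rw [hc]; linarith
  have hct : c < φ t := by rw [hc]; linarith
  set S : Set ℝ := {r | r ∈ Icc s₀ t ∧ φ r < c} with hS
  have hS0 : s₀ ∈ S := ⟨⟨le_refl _, hst⟩, hc₀⟩
  have hSne : S.Nonempty := ⟨s₀, hS0⟩
  have hbdd : BddAbove S := ⟨t, fun x hx => hx.1.2⟩
  set R := sSup S with hR
  have hsR : s₀ ≤ R := le_csSup hbdd hS0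
  have hRt : R ≤ t := csSup_le hSne (fun x hx => hx.1.2)
  have hφR : φ R < c := by
    by_contra hge
    push_neg at hge
    have hs₀R : s₀ < R := by
      rcases eq_or_lt_of_le hsR with h | h
      · exact absurd (h ▸ hge) (not_le.2 hc₀)
      · exact h
    obtain ⟨θ, hθR, hleft⟩ := H2 R hs₀R
    obtain ⟨x, hxS, hθx⟩ := exists_lt_of_lt_csSup hSne hθR
    have hxR : x ≤ R := le_csSup hbdd hxS
    rcases eq_or_lt_of_le hxR with h | h
    · exact absurd (h ▸ hxS.2) (not_lt.2 hge)
    · linarith [hleft x hθx h, hxS.2]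
  have hRteq : R = t := by
    by_contra hne
    have hRlt : R < t := lt_of_le_of_ne hRt hne
    obtain ⟨x, hRx, hxt, hφx⟩ := H1 R hsR hRlt (c - φ R) (by linarith)
    have hxS : x ∈ S := ⟨⟨le_trans hsR (le_of_lt hRx), hxt⟩, by linarith⟩
    exact absurd (le_csSup hbdd hxS) (not_le.2 hRx)
  rw [hRteq] at hφR
  linarith

/-- Two-sided exponential decay for the 2D periodic hyperviscous Navier-Stokes
equations `u_t + νA²u + B(u,u) = 0` (Theorem 3.3), formulated in the abstract
functional setting: `A` is the (symmetric) Stokes operator with first eigenvalue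
`λ₁ = (2π/L)²`, `B` satisfies the orthogonality `(B(v,w),w) = 0` and the
Ladyzhenskaya-type estimate `‖B(v,v)‖ ≤ c λ₁^{-1/2} ‖v‖^{1/2} ‖Av‖^{3/2}`.
Then for `t ≥ t₀ > 0`,
`e^{-b(t-t₀)}‖u(t₀)‖ ≤ ‖u(t)‖ ≤ e^{-νλ₁²(t-t₀)}‖u(t₀)‖`, where
`b = ν (‖Au(t₀)‖²/‖u(t₀)‖²) exp{c' ν^{-3/2} λ₁^{-2} ‖u(t₀)‖²}` for a
dimensionless constant `c'`. -/
theorem hyperviscous_NSE_two_sided_decay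
    {H : Type*} [NormedAddCommGroup H] [InnerProductSpace ℝ H]
    (ν L c : ℝ) (hν : 0 < ν) (hL : 0 < L) (hc : 0 < c)
    (A : H →ₗ[ℝ] H) (B : H → H → H) (u : ℝ → H)
    (hA_symm : ∀ v w : H, inner (𝕜 := ℝ) (A v) w = inner (𝕜 := ℝ) v (A w))
    (hPoincare : ∀ v : H, (2 * π / L) ^ 2 * ‖v‖ ≤ ‖A v‖)
    (hB_orth : ∀ v w : H, inner (𝕜 := ℝ) (B v w) w = (0:ℝ))
    (hB_est : ∀ v : H, ‖B v v‖ ≤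
      c * ((2 * π / L) ^ 2) ^ (-(1:ℝ)/2) * ‖v‖ ^ ((1:ℝ)/2) * ‖A v‖ ^ ((3:ℝ)/2))
    (hu : ∀ t : ℝ, HasDerivAt u (-(ν • A (A (u t)) + B (u t) (u t))) t)
    (hnz : ∀ t : ℝ, u t ≠ 0) :
    ∃ c' : ℝ, 0 < c' ∧
      ∀ t₀ t : ℝ, 0 < t₀ → t₀ ≤ t →
        Real.exp (-(ν * (‖A (u t₀)‖ ^ 2 / ‖u t₀‖ ^ 2) *
            Real.exp (c' * ν ^ (-(3:ℝ)/2) * (((2 * π / L) ^ 2) ^ 2)⁻¹ *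
              ‖u t₀‖ ^ 2)) * (t - t₀)) * ‖u t₀‖ ≤ ‖u t‖ ∧
        ‖u t‖ ≤ Real.exp (-(ν * ((2 * π / L) ^ 2) ^ 2) * (t - t₀)) * ‖u t₀‖ := by
  set lam : ℝ := (2 * π / L) ^ 2 with hlamdef
  have hlam : 0 < lam := by
    rw [hlamdef]
    exact pow_pos (div_pos (by positivity) hL) 2
  set K : ℝ := c ^ 2 / (2 * ν ^ 2 * lam ^ 2) with hKdef
  have hKpos : 0 < K := by rw [hKdef]; positivity
  have hsν : 0 < Real.sqrt ν := Real.sqrt_pos.2 hν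
  -- the dimensionless constant
  refine ⟨c ^ 2 / (2 * Real.sqrt ν), div_pos (pow_pos hc 2) (by positivity), ?_⟩
  -- the constant identity
  have harg : c ^ 2 / (2 * Real.sqrt ν) * ν ^ (-(3:ℝ)/2) * (lam ^ 2)⁻¹ = K := by
    have hh1 : ν ^ (-(3:ℝ)/2) = (ν ^ ((3:ℝ)/2))⁻¹ := by
      rw [show (-(3:ℝ)/2) = -((3:ℝ)/2) by norm_num, Real.rpow_neg hν.le]
    have hh2 : ν ^ ((3:ℝ)/2) = ν * Real.sqrt ν := by
      rw [show ((3:ℝ)/2) = 1 + 1/2 by norm_num, Real.rpow_add hν, Real.rpow_one,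
        ← Real.sqrt_eq_rpow]
    have hs2 : Real.sqrt ν * Real.sqrt ν = ν := Real.mul_self_sqrt hν.le
    rw [hh1, hh2, hKdef]
    have key : 2 * Real.sqrt ν * (ν * Real.sqrt ν) = 2 * ν ^ 2 := by nlinarith [hs2]
    calc c ^ 2 / (2 * Real.sqrt ν) * (ν * Real.sqrt ν)⁻¹ * (lam ^ 2)⁻¹
        = c ^ 2 / (2 * Real.sqrt ν * (ν * Real.sqrt ν) * lam ^ 2) := by
          rw [div_eq_mul_inv, div_eq_mul_inv, mul_inv, mul_inv]
          ring
      _ = c ^ 2 / (2 * ν ^ 2 * lam ^ 2) := by rw [key]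
  intro t₀ t ht₀ ht₀t
  -- basic positivity facts
  have hU : ∀ s : ℝ, 0 < ‖u s‖ := fun s => norm_pos_iff.2 (hnz s)
  have hN : ∀ s : ℝ, 0 < ‖u s‖ ^ 2 := fun s => pow_pos (hU s) 2
  have hV : ∀ s : ℝ, 0 < ‖A (u s)‖ := fun s =>
    lt_of_lt_of_le (mul_pos hlam (hU s)) (hPoincare (u s))
  have hα : ∀ s : ℝ, 0 < ‖A (u s)‖ ^ 2 := fun s => pow_pos (hV s) 2
  have hVN : ∀ s : ℝ, lam ^ 2 * ‖u s‖ ^ 2 ≤ ‖A (u s)‖ ^ 2 := by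
    intro s
    nlinarith [hPoincare (u s), mul_pos hlam (hU s)]
  -- inner product facts
  have hinner_self : ∀ x : H, (inner (𝕜 := ℝ) x x : ℝ) = ‖x‖ ^ 2 := fun x =>
    real_inner_self_eq_norm_sq x
  have hWu : ∀ x : H, (inner (𝕜 := ℝ) x (A (A x)) : ℝ) = ‖A x‖ ^ 2 := by
    intro x
    rw [← hA_symm x (A x)]
    exact real_inner_self_eq_norm_sq _
  have hWu' : ∀ x : H, (inner (𝕜 := ℝ) (A (A x)) x : ℝ) = ‖A x‖ ^ 2 := by
    intro x
    rw [hA_symm (A x) x]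
    exact real_inner_self_eq_norm_sq _
  -- derivative of the energy ‖u s‖²
  have hNderiv : ∀ r : ℝ, HasDerivAt (fun s => ‖u s‖ ^ 2)
      (-(2 * ν) * ‖A (u r)‖ ^ 2) r := by
    intro r
    have h1 := (hu r).inner ℝ (hu r)
    have e1 : (inner (𝕜 := ℝ) (A (A (u r))) (u r) : ℝ) = ‖A (u r)‖ ^ 2 := hWu' (u r)
    have e2 : (inner (𝕜 := ℝ) (-(ν • A (A (u r)) + B (u r) (u r))) (u r) : ℝ)
        = -(ν * ‖A (u r)‖ ^ 2) := by
      rw [inner_neg_left, inner_add_left, real_inner_smul_left, e1, hB_orth]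
      ring
    have e3 : (inner (𝕜 := ℝ) (u r) (-(ν • A (A (u r)) + B (u r) (u r))) : ℝ)
        = -(ν * ‖A (u r)‖ ^ 2) := by
      rw [real_inner_comm]; exact e2
    rw [e2, e3] at h1
    simp only [hinner_self] at h1
    have e4 : -(ν * ‖A (u r)‖ ^ 2) + -(ν * ‖A (u r)‖ ^ 2) = -(2 * ν) * ‖A (u r)‖ ^ 2 := by
      ring
    rwa [e4] at h1
  -- convexity (subgradient) inequality of v ↦ ‖Av‖²
  have hsubgrad : ∀ r s : ℝ, ‖A (u r)‖ ^ 2 - ‖A (u s)‖ ^ 2 ≤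
      2 * ((inner (𝕜 := ℝ) (u r) (A (A (u r))) : ℝ) - inner (𝕜 := ℝ) (u s) (A (A (u r)))) := by
    intro r s
    have h1 : (inner (𝕜 := ℝ) (u s) (A (A (u r))) : ℝ)
        = inner (𝕜 := ℝ) (A (u s)) (A (u r)) := (hA_symm (u s) (A (u r))).symm
    have h2 : (0:ℝ) ≤ ‖A (u s) - A (u r)‖ ^ 2 := by positivity
    rw [norm_sub_sq_real] at h2
    rw [h1, hWu (u r)]
    linarith
  -- squared Ladyzhenskaya estimate
  have hβsq : ∀ s : ℝ, ‖B (u s) (u s)‖ ^ 2 ≤ c ^ 2 * lam⁻¹ * ‖u s‖ * ‖A (u s)‖ ^ 3 := by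
    intro s
    have h := hB_est (u s)
    have h2 : ‖B (u s) (u s)‖ ^ 2
        ≤ (c * lam ^ (-(1:ℝ)/2) * ‖u s‖ ^ ((1:ℝ)/2) * ‖A (u s)‖ ^ ((3:ℝ)/2)) ^ 2 :=
      pow_le_pow_left₀ (norm_nonneg _) h 2
    refine le_trans h2 (le_of_eq ?_)
    have e1 : (lam ^ (-(1:ℝ)/2)) ^ 2 = lam⁻¹ := by
      rw [← Real.rpow_natCast (lam ^ (-(1:ℝ)/2)) 2, ← Real.rpow_mul hlam.le]
      rw [show (-(1:ℝ)/2) * (2:ℕ) = (-1:ℝ) by norm_num, Real.rpow_neg_one]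
    have e2 : (‖u s‖ ^ ((1:ℝ)/2)) ^ 2 = ‖u s‖ := by
      rw [← Real.rpow_natCast (‖u s‖ ^ ((1:ℝ)/2)) 2, ← Real.rpow_mul (norm_nonneg _)]
      norm_num
    have e3 : (‖A (u s)‖ ^ ((3:ℝ)/2)) ^ 2 = ‖A (u s)‖ ^ 3 := by
      rw [← Real.rpow_natCast (‖A (u s)‖ ^ ((3:ℝ)/2)) 2, ← Real.rpow_mul (norm_nonneg _)]
      rw [show (3:ℝ)/2 * (2:ℕ) = ((3:ℕ):ℝ) by norm_num, Real.rpow_natCast]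
    rw [mul_pow, mul_pow, mul_pow, e1, e2, e3]
  -- the key dissipativity ("bracket") estimate
  have hbracket : ∀ r : ℝ,
      2 * (inner (𝕜 := ℝ) (-(ν • A (A (u r)) + B (u r) (u r))) (A (A (u r))) : ℝ) +
        ‖A (u r)‖ ^ 2 * ((-(2 * ν) * ‖A (u r)‖ ^ 2) * (K - (‖u r‖ ^ 2)⁻¹)) < 0 := by
    intro r
    set Wt : H := A (A (u r)) - (‖A (u r)‖ ^ 2 / ‖u r‖ ^ 2) • u r with hWt
    have h1 : (inner (𝕜 := ℝ) (-(ν • A (A (u r)) + B (u r) (u r))) (A (A (u r))) : ℝ)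
        = -(ν * ‖A (A (u r))‖ ^ 2) - inner (𝕜 := ℝ) (B (u r) (u r)) (A (A (u r))) := by
      rw [inner_neg_left, inner_add_left, real_inner_smul_left, real_inner_self_eq_norm_sq]
      ring
    have h2 : (inner (𝕜 := ℝ) (B (u r) (u r)) (A (A (u r))) : ℝ)
        = inner (𝕜 := ℝ) (B (u r) (u r)) Wt := by
      rw [hWt, inner_sub_right, real_inner_smul_right, hB_orth (u r) (u r)]
      ring
    have h3 : ‖Wt‖ ^ 2 = ‖A (A (u r))‖ ^ 2 - (‖A (u r)‖ ^ 2) ^ 2 / ‖u r‖ ^ 2 := by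
      rw [hWt, norm_sub_sq_real, real_inner_smul_right, hWu' (u r), norm_smul,
        mul_pow, Real.norm_eq_abs, sq_abs]
      have hn := (hN r).ne'
      field_simp
      ring
    have h4 : -(2:ℝ) * inner (𝕜 := ℝ) (B (u r) (u r)) Wt ≤ 2 * (‖B (u r) (u r)‖ * ‖Wt‖) := by
      have := abs_real_inner_le_norm (B (u r) (u r)) Wt
      have h' := neg_abs_le (inner (𝕜 := ℝ) (B (u r) (u r)) Wt : ℝ)
      linarith
    have h5 : 2 * (‖B (u r) (u r)‖ * ‖Wt‖) - 2 * ν * ‖Wt‖ ^ 2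
        ≤ ‖B (u r) (u r)‖ ^ 2 / (2 * ν) := by
      rw [le_div_iff₀ (by positivity)]
      nlinarith [sq_nonneg (2 * ν * ‖Wt‖ - ‖B (u r) (u r)‖)]
    have h6 : ‖B (u r) (u r)‖ ^ 2 / (2 * ν) ≤ ν * K * (‖A (u r)‖ ^ 2) ^ 2 := by
      have h7 := hβsq r
      have h8 : ‖u r‖ ≤ ‖A (u r)‖ / lam := by
        rw [le_div_iff₀ hlam]
        linarith [hPoincare (u r)]
      have h9 : ‖B (u r) (u r)‖ ^ 2 ≤ c ^ 2 * lam⁻¹ * (‖A (u r)‖ / lam) * ‖A (u r)‖ ^ 3 := by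
        refine le_trans h7 ?_
        gcongr
      have h10 : c ^ 2 * lam⁻¹ * (‖A (u r)‖ / lam) * ‖A (u r)‖ ^ 3
          = ν * K * (‖A (u r)‖ ^ 2) ^ 2 * (2 * ν) := by
        rw [hKdef]
        field_simp
      rw [div_le_iff₀ (by positivity)]
      linarith
    have E3 : ‖A (u r)‖ ^ 2 * ((-(2 * ν) * ‖A (u r)‖ ^ 2) * (K - (‖u r‖ ^ 2)⁻¹))
        = -(2 * ν * K * (‖A (u r)‖ ^ 2) ^ 2) + 2 * ν * ((‖A (u r)‖ ^ 2) ^ 2 / ‖u r‖ ^ 2) := by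
      have hn := (hN r).ne'
      field_simp
      ring
    have hfin : 0 < ν * K * (‖A (u r)‖ ^ 2) ^ 2 := by
      have := hα r
      positivity
    rw [h1, h2, E3]
    nlinarith [h3, h4, h5, h6, hfin, sq_nonneg ‖Wt‖]
  -- the Lyapunov functional φf = ‖Au‖² e^{K‖u‖²}/‖u‖²
  set ρ : ℝ → ℝ := fun s => Real.exp (K * ‖u s‖ ^ 2) * (‖u s‖ ^ 2)⁻¹ with hρdef
  have hρpos : ∀ s, 0 < ρ s := fun s => mul_pos (Real.exp_pos _) (inv_pos.2 (hN s))
  set ρd : ℝ → ℝ := fun r => Real.exp (K * ‖u r‖ ^ 2) * (K * (-(2 * ν) * ‖A (u r)‖ ^ 2)) *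
      (‖u r‖ ^ 2)⁻¹ + Real.exp (K * ‖u r‖ ^ 2) *
      (-(-(2 * ν) * ‖A (u r)‖ ^ 2) / (‖u r‖ ^ 2) ^ 2) with hρddef
  have hρd : ∀ r : ℝ, HasDerivAt ρ (ρd r) r := by
    intro r
    have h1 := ((hNderiv r).const_mul K).exp
    have h2 := (hNderiv r).inv (hN r).ne'
    exact h1.mul h2
  have hρd_eq : ∀ r : ℝ, ρd r = ρ r * ((-(2 * ν) * ‖A (u r)‖ ^ 2) * (K - (‖u r‖ ^ 2)⁻¹)) := by
    intro r
    rw [hρddef, hρdef]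
    have hn := (hN r).ne'
    ring
  set φf : ℝ → ℝ := fun s => ‖A (u s)‖ ^ 2 * ρ s with hφdef
  -- H2 : strictly bigger immediately to the left
  have hH2 : ∀ r : ℝ, ∃ θ, θ < r ∧ ∀ s, θ < s → s < r → φf r < φf s := by
    intro r
    set ψ : ℝ → ℝ := fun s => (inner (𝕜 := ℝ) (u s) (A (A (u r))) : ℝ) with hψdef
    have hψd : ∀ s : ℝ, HasDerivAt ψ
        ((inner (𝕜 := ℝ) (-(ν • A (A (u s)) + B (u s) (u s))) (A (A (u r))) : ℝ)) s := by
      intro s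
      have h0 : HasDerivAt (fun _ : ℝ => A (A (u r))) 0 s := hasDerivAt_const _ _
      have h1 := (hu s).inner ℝ h0
      simpa using h1
    set g : ℝ → ℝ := fun s => 2 * (ρ s * ψ s) - 2 * (ψ r * ρ s) + ‖A (u r)‖ ^ 2 * ρ s
        - ‖A (u r)‖ ^ 2 * ρ r with hgdef
    have hg0 : g r = 0 := by rw [hgdef]; ring
    have hgd : HasDerivAt g (2 * (ρd r * ψ r + ρ r *
        (inner (𝕜 := ℝ) (-(ν • A (A (u r)) + B (u r) (u r))) (A (A (u r))) : ℝ))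
        - 2 * (ψ r * ρd r) + ‖A (u r)‖ ^ 2 * ρd r) r := by
      have d1 := ((hρd r).mul (hψd r)).const_mul 2
      have d2 := ((hρd r).const_mul (ψ r)).const_mul 2
      have d3 := (hρd r).const_mul (‖A (u r)‖ ^ 2)
      exact ((d1.sub d2).add d3).sub_const _
    have hgneg : 2 * (ρd r * ψ r + ρ r *
        (inner (𝕜 := ℝ) (-(ν • A (A (u r)) + B (u r) (u r))) (A (A (u r))) : ℝ))
        - 2 * (ψ r * ρd r) + ‖A (u r)‖ ^ 2 * ρd r < 0 := by
      have h1 := hbracket r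
      have h2 := hρd_eq r
      have h3 := hρpos r
      have h4 : 2 * (ρd r * ψ r + ρ r *
          (inner (𝕜 := ℝ) (-(ν • A (A (u r)) + B (u r) (u r))) (A (A (u r))) : ℝ))
          - 2 * (ψ r * ρd r) + ‖A (u r)‖ ^ 2 * ρd r
          = ρ r * (2 * (inner (𝕜 := ℝ) (-(ν • A (A (u r)) + B (u r) (u r))) (A (A (u r))) : ℝ) +
            ‖A (u r)‖ ^ 2 * ((-(2 * ν) * ‖A (u r)‖ ^ 2) * (K - (‖u r‖ ^ 2)⁻¹))) := by
        rw [h2]; ring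
      rw [h4]
      exact mul_neg_of_pos_of_neg h3 h1
    have hsl := hasDerivAt_iff_tendsto_slope.mp hgd
    have hmono : 𝓝[<] r ≤ 𝓝[≠] r := nhdsWithin_mono r (fun x hx => ne_of_lt hx)
    have hev1 : ∀ᶠ s in 𝓝[<] r, slope g r s < 0 :=
      (hsl.mono_left hmono).eventually_lt_const hgneg
    have hev2 : ∀ᶠ s in 𝓝[<] r, s < r := eventually_mem_nhdsWithin
    have hev : ∀ᶠ s in 𝓝[<] r, 0 < g s := by
      filter_upwards [hev1, hev2] with s hs1 hs2
      rw [slope_def_field, hg0, sub_zero] at hs1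
      rcases div_neg_iff.mp hs1 with ⟨h, h'⟩ | ⟨h, h'⟩
      · linarith
      · linarith
    obtain ⟨θ, hθ, hsub2⟩ := mem_nhdsLT_iff_exists_Ioo_subset.mp hev
    refine ⟨θ, hθ, fun s hθs hsr => ?_⟩
    have hgs : 0 < g s := hsub2 ⟨hθs, hsr⟩
    have hsg' : ‖A (u r)‖ ^ 2 - ‖A (u s)‖ ^ 2 ≤ 2 * (ψ r - ψ s) := by
      have := hsubgrad r s
      rw [hψdef]
      simpa using this
    have hid : φf s - φf r - g s
        = ρ s * (2 * (ψ r - ψ s) - (‖A (u r)‖ ^ 2 - ‖A (u s)‖ ^ 2)) := by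
      rw [hφdef, hgdef]
      ring
    nlinarith [mul_nonneg (hρpos s).le (sub_nonneg.2 hsg')]
  -- H1: right cluster property
  have hH1 : ∀ z r : ℝ, r < z → ∀ ε : ℝ, 0 < ε → ∃ x, r < x ∧ x < z ∧ φf x < φf r + ε := by
    intro z r hrz ε hε
    have hρr := hρpos r
    set ε₁ : ℝ := min 1 (ε / 2 / (ρ r + 1)) with hε₁def
    have hε₁pos : 0 < ε₁ := lt_min one_pos (div_pos (by linarith) (by linarith))
    have hε₁le1 : ε₁ ≤ 1 := min_le_left _ _
    have hε₁le2 : ε₁ ≤ ε / 2 / (ρ r + 1) := min_le_right _ _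
    set ε₂ : ℝ := ε / (2 * (‖A (u r)‖ ^ 2 + 1)) with hε₂def
    have hε₂pos : 0 < ε₂ := by rw [hε₂def]; positivity
    have hsl := hasDerivAt_iff_tendsto_slope.mp (hNderiv r)
    have hball : ∀ᶠ y in 𝓝[≠] r,
        |slope (fun s => ‖u s‖ ^ 2) r y - (-(2 * ν) * ‖A (u r)‖ ^ 2)| < 2 * ν * ε₁ := by
      have h2 := hsl.eventually (Metric.ball_mem_nhds (-(2 * ν) * ‖A (u r)‖ ^ 2)
        (show (0:ℝ) < 2 * ν * ε₁ by positivity))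
      simpa [Metric.mem_ball, Real.dist_eq] using h2
    rw [Filter.Eventually, Metric.mem_nhdsWithin_iff] at hball
    obtain ⟨δ₁, hδ₁pos, hδ₁⟩ := hball
    obtain ⟨δ₂, hδ₂pos, hδ₂⟩ := Metric.continuousAt_iff.mp (hρd r).continuousAt ε₂ hε₂pos
    set d : ℝ := min δ₁ (min δ₂ (z - r)) with hddef
    have hdpos : 0 < d := lt_min hδ₁pos (lt_min hδ₂pos (by linarith))
    have hd1 : d ≤ δ₁ := min_le_left _ _
    have hd2 : d ≤ δ₂ := le_trans (min_le_right _ _) (min_le_left _ _)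
    have hd3 : d ≤ z - r := le_trans (min_le_right _ _) (min_le_right _ _)
    set x : ℝ := r + d / 2 with hxdef
    have hrx : r < x := by rw [hxdef]; linarith
    have hxz : x < z := by rw [hxdef]; linarith
    have hcont : ContinuousOn (fun s => ‖u s‖ ^ 2) (Icc r x) := fun y _ =>
      ((hNderiv y).continuousAt).continuousWithinAt
    obtain ⟨ξ, hξmem, hξ⟩ := exists_hasDerivAt_eq_slope (fun s => ‖u s‖ ^ 2)
      (fun y => -(2 * ν) * ‖A (u y)‖ ^ 2) hrx hcont (fun y _ => hNderiv y)
    obtain ⟨hrξ, hξx⟩ := hξmem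
    have hxball : x ∈ Metric.ball r δ₁ ∩ {y | y ≠ r} := by
      constructor
      · rw [Metric.mem_ball, Real.dist_eq, hxdef]
        rw [show r + d / 2 - r = d / 2 by ring, abs_of_pos (by linarith)]
        linarith
      · exact ne_of_gt hrx
    have hx1 := hδ₁ hxball
    have hslx : slope (fun s => ‖u s‖ ^ 2) r x = -(2 * ν) * ‖A (u ξ)‖ ^ 2 := by
      rw [slope_def_field, ← hξ]
    rw [Set.mem_setOf_eq, hslx] at hx1
    have h2ν : (0:ℝ) < 2 * ν := by linarith
    have hαclose : |‖A (u ξ)‖ ^ 2 - ‖A (u r)‖ ^ 2| < ε₁ := by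
      have e : -(2 * ν) * ‖A (u ξ)‖ ^ 2 - -(2 * ν) * ‖A (u r)‖ ^ 2
          = -(2 * ν) * (‖A (u ξ)‖ ^ 2 - ‖A (u r)‖ ^ 2) := by ring
      rw [e, abs_mul, abs_neg, abs_of_pos h2ν] at hx1
      exact (mul_lt_mul_iff_right₀ h2ν).mp hx1
    have hξd : dist ξ r < δ₂ := by
      rw [Real.dist_eq, abs_of_pos (sub_pos.2 hrξ)]
      have : ξ < r + d / 2 := by rw [hxdef] at hξx; exact hξx
      linarith
    have hρclose : |ρ ξ - ρ r| < ε₂ := by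
      have := hδ₂ hξd
      rwa [Real.dist_eq] at this
    refine ⟨ξ, hrξ, lt_trans hξx hxz, ?_⟩
    obtain ⟨ha1, ha2⟩ := abs_lt.mp hαclose
    obtain ⟨hb1, hb2⟩ := abs_lt.mp hρclose
    have hαξ : (0:ℝ) ≤ ‖A (u ξ)‖ ^ 2 := by positivity
    have key1 : ‖A (u ξ)‖ ^ 2 * (ρ ξ - ρ r) ≤ (‖A (u r)‖ ^ 2 + 1) * ε₂ := by nlinarith
    have key2 : (‖A (u ξ)‖ ^ 2 - ‖A (u r)‖ ^ 2) * ρ r < ε₁ * ρ r :=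
      mul_lt_mul_of_pos_right ha2 hρr
    have key3 : (‖A (u r)‖ ^ 2 + 1) * ε₂ = ε / 2 := by
      rw [hε₂def]
      field_simp
    have key4 : ε₁ * ρ r ≤ ε / 2 / (ρ r + 1) * ρ r :=
      mul_le_mul_of_nonneg_right hε₁le2 hρr.le
    have key5 : ε / 2 / (ρ r + 1) * ρ r < ε / 2 := by
      have hA : (0:ℝ) < ε / 2 / (ρ r + 1) := div_pos (by linarith) (by linarith)
      have hB := mul_lt_mul_of_pos_left (show ρ r < ρ r + 1 by linarith) hA
      rwa [div_mul_cancel₀ _ (show (ρ r + 1) ≠ 0 from (by linarith : (0:ℝ) < ρ r + 1).ne')] at hB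
    have hid : φf ξ - φf r = ‖A (u ξ)‖ ^ 2 * (ρ ξ - ρ r)
        + (‖A (u ξ)‖ ^ 2 - ‖A (u r)‖ ^ 2) * ρ r := by
      rw [hφdef]; ring
    linarith
  -- global quasi-monotonicity of the Lyapunov functional via the barrier lemma
  have hφmono : ∀ s r : ℝ, s ≤ r → φf r ≤ φf s := by
    intro s r hsr
    refine barrier_lemma φf hsr ?_ ?_
    · intro x _ hxr ε hε
      obtain ⟨y, h1, h2, h3⟩ := hH1 r x hxr ε hε
      exact ⟨y, h1, h2.le, h3⟩
    · intro x _
      exact hH2 x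
  have hφb : ∀ s r : ℝ, s ≤ r →
      ‖A (u r)‖ ^ 2 * (Real.exp (K * ‖u r‖ ^ 2) * (‖u r‖ ^ 2)⁻¹) ≤
      ‖A (u s)‖ ^ 2 * (Real.exp (K * ‖u s‖ ^ 2) * (‖u s‖ ^ 2)⁻¹) := by
    intro s r hsr
    have := hφmono s r hsr
    simpa only [hφdef, hρdef] using this
  -- rewrite the goal's constant into K
  rw [harg]
  set b : ℝ := ν * (‖A (u t₀)‖ ^ 2 / ‖u t₀‖ ^ 2) * Real.exp (K * ‖u t₀‖ ^ 2) with hbdef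
  have hbpos : 0 < b :=
    mul_pos (mul_pos hν (div_pos (hα t₀) (hN t₀))) (Real.exp_pos _)
  -- pointwise bound ν‖Au‖² ≤ b‖u‖² on [t₀, ∞)
  have hqb : ∀ s : ℝ, t₀ ≤ s → ν * ‖A (u s)‖ ^ 2 ≤ b * ‖u s‖ ^ 2 := by
    intro s hs
    have h1 := hφb t₀ s hs
    have hE1 : (1:ℝ) ≤ Real.exp (K * ‖u s‖ ^ 2) :=
      Real.one_le_exp (mul_nonneg hKpos.le (hN s).le)
    have h2 : ‖A (u s)‖ ^ 2 ≤ ‖A (u s)‖ ^ 2 * Real.exp (K * ‖u s‖ ^ 2) :=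
      le_mul_of_one_le_right (hα s).le hE1
    have h3 : ‖A (u s)‖ ^ 2 * Real.exp (K * ‖u s‖ ^ 2)
        = (‖A (u s)‖ ^ 2 * (Real.exp (K * ‖u s‖ ^ 2) * (‖u s‖ ^ 2)⁻¹)) * ‖u s‖ ^ 2 := by
      field_simp
      rw [mul_div_assoc, div_self (hU s).ne', mul_one]
    have h4 : (‖A (u s)‖ ^ 2 * (Real.exp (K * ‖u s‖ ^ 2) * (‖u s‖ ^ 2)⁻¹)) * ‖u s‖ ^ 2
        ≤ (‖A (u t₀)‖ ^ 2 * (Real.exp (K * ‖u t₀‖ ^ 2) * (‖u t₀‖ ^ 2)⁻¹)) * ‖u s‖ ^ 2 :=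
      mul_le_mul_of_nonneg_right h1 (hN s).le
    have h5 : ν * ((‖A (u t₀)‖ ^ 2 * (Real.exp (K * ‖u t₀‖ ^ 2) * (‖u t₀‖ ^ 2)⁻¹)) * ‖u s‖ ^ 2)
        = b * ‖u s‖ ^ 2 := by
      rw [hbdef, div_eq_mul_inv]
      ring
    calc ν * ‖A (u s)‖ ^ 2
        ≤ ν * ((‖A (u t₀)‖ ^ 2 * (Real.exp (K * ‖u t₀‖ ^ 2) * (‖u t₀‖ ^ 2)⁻¹)) * ‖u s‖ ^ 2) := by
          apply mul_le_mul_of_nonneg_left _ hν.le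
          rw [← h3] at h4
          linarith
      _ = b * ‖u s‖ ^ 2 := h5
  -- lower bound
  have hE2d : ∀ r : ℝ, HasDerivAt (fun s => Real.exp (2 * b * s) * ‖u s‖ ^ 2)
      (Real.exp (2 * b * r) * (2 * b * 1) * ‖u r‖ ^ 2 +
        Real.exp (2 * b * r) * (-(2 * ν) * ‖A (u r)‖ ^ 2)) r := fun r =>
    (((hasDerivAt_id r).const_mul (2 * b)).exp).mul (hNderiv r)
  have hmonoE2 : MonotoneOn (fun s => Real.exp (2 * b * s) * ‖u s‖ ^ 2) (Ici t₀) := by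
    apply monotoneOn_of_deriv_nonneg (convex_Ici t₀)
    · intro y _
      exact ((hE2d y).continuousAt).continuousWithinAt
    · intro y _
      exact ((hE2d y).differentiableAt).differentiableWithinAt
    · intro y hy
      rw [(hE2d y).deriv]
      rw [interior_Ici] at hy
      have h1 := hqb y (le_of_lt hy)
      have h2 : Real.exp (2 * b * y) * (2 * b * 1) * ‖u y‖ ^ 2 +
          Real.exp (2 * b * y) * (-(2 * ν) * ‖A (u y)‖ ^ 2)
          = Real.exp (2 * b * y) * 2 * (b * ‖u y‖ ^ 2 - ν * ‖A (u y)‖ ^ 2) := by ring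
      rw [h2]
      exact mul_nonneg (by positivity) (by linarith)
  have hlow := hmonoE2 self_mem_Ici (mem_Ici.2 ht₀t) ht₀t
  simp only at hlow
  have hsq : (Real.exp (-b * (t - t₀)) * ‖u t₀‖) ^ 2 ≤ ‖u t‖ ^ 2 := by
    rw [mul_pow]
    have e1 : Real.exp (-b * (t - t₀)) ^ 2 = Real.exp (2 * b * t₀) / Real.exp (2 * b * t) := by
      rw [← Real.exp_nat_mul, ← Real.exp_sub]
      congr 1
      push_cast
      ring
    rw [e1, div_mul_eq_mul_div, div_le_iff₀ (Real.exp_pos _)]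
    calc Real.exp (2 * b * t₀) * ‖u t₀‖ ^ 2 ≤ Real.exp (2 * b * t) * ‖u t‖ ^ 2 := hlow
      _ = ‖u t‖ ^ 2 * Real.exp (2 * b * t) := mul_comm _ _
  have hfinal_low : Real.exp (-b * (t - t₀)) * ‖u t₀‖ ≤ ‖u t‖ := by
    have h1 := Real.sqrt_le_sqrt hsq
    rwa [Real.sqrt_sq (by positivity), Real.sqrt_sq (norm_nonneg _)] at h1
  -- upper bound
  have hE1d : ∀ r : ℝ, HasDerivAt (fun s => Real.exp (2 * ν * lam ^ 2 * s) * ‖u s‖ ^ 2)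
      (Real.exp (2 * ν * lam ^ 2 * r) * (2 * ν * lam ^ 2 * 1) * ‖u r‖ ^ 2 +
        Real.exp (2 * ν * lam ^ 2 * r) * (-(2 * ν) * ‖A (u r)‖ ^ 2)) r := fun r =>
    (((hasDerivAt_id r).const_mul (2 * ν * lam ^ 2)).exp).mul (hNderiv r)
  have hantiE1 : AntitoneOn (fun s => Real.exp (2 * ν * lam ^ 2 * s) * ‖u s‖ ^ 2) (Ici t₀) := by
    apply antitoneOn_of_deriv_nonpos (convex_Ici t₀)
    · intro y _
      exact ((hE1d y).continuousAt).continuousWithinAt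
    · intro y _
      exact ((hE1d y).differentiableAt).differentiableWithinAt
    · intro y _
      rw [(hE1d y).deriv]
      have h1 := hVN y
      have h2 : Real.exp (2 * ν * lam ^ 2 * y) * (2 * ν * lam ^ 2 * 1) * ‖u y‖ ^ 2 +
          Real.exp (2 * ν * lam ^ 2 * y) * (-(2 * ν) * ‖A (u y)‖ ^ 2)
          = Real.exp (2 * ν * lam ^ 2 * y) * (2 * ν) *
            (lam ^ 2 * ‖u y‖ ^ 2 - ‖A (u y)‖ ^ 2) := by ring
      rw [h2]
      exact mul_nonpos_of_nonneg_of_nonpos (by positivity) (by linarith)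
  have hup := hantiE1 self_mem_Ici (mem_Ici.2 ht₀t) ht₀t
  simp only at hup
  have hsq2 : ‖u t‖ ^ 2 ≤ (Real.exp (-(ν * lam ^ 2) * (t - t₀)) * ‖u t₀‖) ^ 2 := by
    rw [mul_pow]
    have e1 : Real.exp (-(ν * lam ^ 2) * (t - t₀)) ^ 2
        = Real.exp (2 * ν * lam ^ 2 * t₀) / Real.exp (2 * ν * lam ^ 2 * t) := by
      rw [← Real.exp_nat_mul, ← Real.exp_sub]
      congr 1
      push_cast
      ring
    rw [e1, div_mul_eq_mul_div, le_div_iff₀ (Real.exp_pos _)]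
    calc ‖u t‖ ^ 2 * Real.exp (2 * ν * lam ^ 2 * t)
        = Real.exp (2 * ν * lam ^ 2 * t) * ‖u t‖ ^ 2 := mul_comm _ _
      _ ≤ Real.exp (2 * ν * lam ^ 2 * t₀) * ‖u t₀‖ ^ 2 := hup
  have hfinal_up : ‖u t‖ ≤ Real.exp (-(ν * lam ^ 2) * (t - t₀)) * ‖u t₀‖ := by
    have h1 := Real.sqrt_le_sqrt hsq2
    rwa [Real.sqrt_sq (norm_nonneg _), Real.sqrt_sq (by positivity)] at h1
  exact ⟨hfinal_low, hfinal_up⟩
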